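/- Every finitely generated free group is Hopfian. -/

import Mathlib

namespace Stmt9Aux

open FreeGroup

variable {α : Type*} [DecidableEq α]

/-- In a reduced word, no adjacent cancelling pair. -/
lemma no_cancel {L : List (α × Bool)} (hL : FreeGroup.reduce L = L) {j : ℕ} {x : α} {b : Bool}
    (h1 : L[j]? = some (x, b)) (h2 : L[j + 1]? = some (x, !b)) : False := by
  obtain ⟨hj, h1⟩ := List.getElem?_eq_some_iff.mp h1
  obtain ⟨hj2, h2⟩ := List.getElem?_eq_some_iff.mp h2
  have hsplit : L = L.take j ++ (x, b) :: (x, !b) :: L.drop (j + 2) := by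
    conv_lhs => rw [← List.take_append_drop j L]
    congr 1
    rw [List.drop_eq_getElem_cons hj, h1]
    congr 1
    rw [List.drop_eq_getElem_cons hj2, h2]
  exact FreeGroup.reduce.not (p := False) (hL.trans hsplit)

section Perm

variable (L : List (α × Bool)) (i : α)

def Up (a : Fin (L.length + 1)) : Prop :=
  (a : ℕ) < L.length ∧ L[L.length - 1 - (a : ℕ)]? = some (i, true)

def Down (a : Fin (L.length + 1)) : Prop :=
  L[L.length - (a : ℕ)]? = some (i, false)

def Up' (a : Fin (L.length + 1)) : Prop :=
  L[L.length - (a : ℕ)]? = some (i, true)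

def Down' (a : Fin (L.length + 1)) : Prop :=
  (a : ℕ) < L.length ∧ L[L.length - 1 - (a : ℕ)]? = some (i, false)

instance : DecidablePred (Up L i) := fun a => by unfold Up; infer_instance
instance : DecidablePred (Down L i) := fun a => by unfold Down; infer_instance
instance : DecidablePred (Up' L i) := fun a => by unfold Up'; infer_instance
instance : DecidablePred (Down' L i) := fun a => by unfold Down'; infer_instance

variable {L i}

lemma Down.pos {a : Fin (L.length + 1)} (h : Down L i a) : 1 ≤ (a : ℕ) := by
  have := (List.getElem?_eq_some_iff.mp h).1; omega

lemma Up'.pos {a : Fin (L.length + 1)} (h : Up' L i a) : 1 ≤ (a : ℕ) := by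
  have := (List.getElem?_eq_some_iff.mp h).1; omega

variable (hL : FreeGroup.reduce L = L)
include hL

lemma not_up_and_down {a : Fin (L.length + 1)} (h1 : Up L i a) (h2 : Down L i a) : False := by
  obtain ⟨ha, h1⟩ := h1
  unfold Down at h2
  have heq : L.length - (a : ℕ) = (L.length - 1 - (a : ℕ)) + 1 := by omega
  rw [heq] at h2
  exact no_cancel hL h1 h2

lemma not_up'_and_down' {a : Fin (L.length + 1)} (h1 : Up' L i a) (h2 : Down' L i a) : False := by
  obtain ⟨ha, h2⟩ := h2
  unfold Up' at h1
  have heq : L.length - (a : ℕ) = (L.length - 1 - (a : ℕ)) + 1 := by omega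
  rw [heq] at h1
  exact no_cancel hL h2 h1

end Perm


section Perm2

variable (L : List (α × Bool)) (i : α)

def sigFun (a : {a : Fin (L.length + 1) // Up L i a ∨ Down L i a}) : Fin (L.length + 1) :=
  if h : Up L i a.1 then ⟨(a.1 : ℕ) + 1, by have := h.1; omega⟩
  else ⟨(a.1 : ℕ) - 1, by omega⟩

variable {L i}

lemma sigFun_of_up {a} (h : Up L i a.1) : (sigFun L i a : ℕ) = (a.1 : ℕ) + 1 := by
  simp [sigFun, dif_pos h]

lemma sigFun_of_down {a} (h : ¬ Up L i a.1) : (sigFun L i a : ℕ) = (a.1 : ℕ) - 1 := by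
  simp [sigFun, dif_neg h]

lemma sigFun_mem_up {a} (h : Up L i a.1) : Up' L i (sigFun L i a) := by
  show L[L.length - (sigFun L i a : ℕ)]? = some (i, true)
  rw [sigFun_of_up h]
  have heq : L.length - ((a.1 : ℕ) + 1) = L.length - 1 - (a.1 : ℕ) := by omega
  rw [heq]; exact h.2

lemma sigFun_mem_down {a} (h : ¬ Up L i a.1) : Down' L i (sigFun L i a) := by
  have hd : Down L i a.1 := a.2.resolve_left h
  have h1 := hd.pos
  have h2 := (List.getElem?_eq_some_iff.mp hd).1
  refine ⟨?_, ?_⟩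
  · rw [sigFun_of_down h]; omega
  · show L[L.length - 1 - (sigFun L i a : ℕ)]? = some (i, false)
    rw [sigFun_of_down h]
    have heq : L.length - 1 - ((a.1 : ℕ) - 1) = L.length - (a.1 : ℕ) := by omega
    rw [heq]; exact hd

lemma sigFun_mem {a} : Up' L i (sigFun L i a) ∨ Down' L i (sigFun L i a) := by
  by_cases h : Up L i a.1
  · exact Or.inl (sigFun_mem_up h)
  · exact Or.inr (sigFun_mem_down h)

variable (L i) in
def sigFun' (a : {a : Fin (L.length + 1) // Up L i a ∨ Down L i a}) :
    {a : Fin (L.length + 1) // Up' L i a ∨ Down' L i a} :=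
  ⟨sigFun L i a, sigFun_mem⟩

variable (hL : FreeGroup.reduce L = L)
include hL

lemma sigFun'_injective : Function.Injective (sigFun' L i) := by
  rintro a b hab
  have hval : (sigFun L i a : ℕ) = (sigFun L i b : ℕ) := by
    have := congrArg (fun x => ((x : {a : Fin (L.length + 1) // _}).1 : ℕ)) hab
    exact this
  ext
  by_cases ha : Up L i a.1 <;> by_cases hb : Up L i b.1
  · rw [sigFun_of_up ha, sigFun_of_up hb] at hval; omega
  · exfalso
    have h1 := sigFun_mem_up ha
    have h2 := sigFun_mem_down hb
    rw [show sigFun L i a = sigFun L i b from congrArg Subtype.val hab] at h1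
    exact not_up'_and_down' hL h1 h2
  · exfalso
    have h1 := sigFun_mem_up hb
    have h2 := sigFun_mem_down ha
    rw [show sigFun L i b = sigFun L i a from (congrArg Subtype.val hab).symm] at h1
    exact not_up'_and_down' hL h1 h2
  · rw [sigFun_of_down ha, sigFun_of_down hb] at hval
    have h1 := (a.2.resolve_left ha).pos
    have h2 := (b.2.resolve_left hb).pos
    omega

lemma sigFun'_surjective : Function.Surjective (sigFun' L i) := by
  rintro ⟨b, hb | hb⟩
  · have hpos := hb.pos
    have hidx := (List.getElem?_eq_some_iff.mp hb).1
    have hup : Up L i (⟨(b : ℕ) - 1, by omega⟩ : Fin (L.length + 1)) := by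
      refine ⟨by show (b : ℕ) - 1 < L.length; omega, ?_⟩
      show L[L.length - 1 - ((b : ℕ) - 1)]? = some (i, true)
      have heq : L.length - 1 - ((b : ℕ) - 1) = L.length - (b : ℕ) := by omega
      rw [heq]; exact hb
    refine ⟨⟨⟨(b : ℕ) - 1, by omega⟩, Or.inl hup⟩, ?_⟩
    apply Subtype.ext; apply Fin.ext
    show (sigFun L i _ : ℕ) = (b : ℕ)
    rw [sigFun_of_up hup]
    show (b : ℕ) - 1 + 1 = (b : ℕ); omega
  · obtain ⟨hblt, hbeq⟩ := hb
    have hdown : Down L i (⟨(b : ℕ) + 1, by omega⟩ : Fin (L.length + 1)) := by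
      show L[L.length - ((b : ℕ) + 1)]? = some (i, false)
      have heq : L.length - ((b : ℕ) + 1) = L.length - 1 - (b : ℕ) := by omega
      rw [heq]; exact hbeq
    have hnup : ¬ Up L i (⟨(b : ℕ) + 1, by omega⟩ : Fin (L.length + 1)) :=
      fun hup => not_up_and_down hL hup hdown
    refine ⟨⟨⟨(b : ℕ) + 1, by omega⟩, Or.inr hdown⟩, ?_⟩
    apply Subtype.ext; apply Fin.ext
    show (sigFun L i _ : ℕ) = (b : ℕ)
    rw [sigFun_of_down hnup]
    show (b : ℕ) + 1 - 1 = (b : ℕ); omega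

variable (i) in
noncomputable def sig : Equiv.Perm (Fin (L.length + 1)) :=
  (Equiv.ofBijective (sigFun' L i) ⟨sigFun'_injective hL, sigFun'_surjective hL⟩).extendSubtype

lemma sig_of_up {a : Fin (L.length + 1)} (h : Up L i a) : (sig i hL a : ℕ) = (a : ℕ) + 1 := by
  unfold sig
  rw [Equiv.extendSubtype_apply_of_mem _ a (Or.inl h)]
  exact sigFun_of_up h

lemma sig_of_down {a : Fin (L.length + 1)} (h : Down L i a) : (sig i hL a : ℕ) = (a : ℕ) - 1 := by
  unfold sig
  rw [Equiv.extendSubtype_apply_of_mem _ a (Or.inr h)]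
  exact sigFun_of_down (fun hup => not_up_and_down hL hup h)

end Perm2


section Key

variable {L : List (α × Bool)} (hL : FreeGroup.reduce L = L)
include hL

lemma key (j : ℕ) (h : j ≤ L.length) :
    (((L.drop (L.length - j)).map fun x => cond x.2 (sig x.1 hL) (sig x.1 hL)⁻¹).prod)
      ⟨0, by omega⟩ = ⟨j, by omega⟩ := by
  induction j with
  | zero => simp
  | succ j ih =>
    have hk : L.length - (j + 1) < L.length := by omega
    rw [List.drop_eq_getElem_cons hk, List.map_cons, List.prod_cons]
    have hrest : L.length - (j + 1) + 1 = L.length - j := by omega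
    rw [hrest, Equiv.Perm.mul_apply, ih (by omega)]
    have hLk : L[L.length - (j + 1)]? =
        some ((L[L.length - (j + 1)]'hk).1, (L[L.length - (j + 1)]'hk).2) := by
      rw [List.getElem?_eq_getElem hk]
    cases hp : (L[L.length - (j + 1)]'hk).2 with
    | true =>
      show sig (L[L.length - (j + 1)]'hk).1 hL ⟨j, by omega⟩ = ⟨j + 1, by omega⟩
      have hup : Up L (L[L.length - (j + 1)]'hk).1 ⟨j, by omega⟩ := by
        refine ⟨by show j < L.length; omega, ?_⟩
        show L[L.length - 1 - j]? = some _
        have heq : L.length - 1 - j = L.length - (j + 1) := by omega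
        rw [heq, hLk, hp]
      apply Fin.ext
      rw [sig_of_up hL hup]
    | false =>
      show (sig (L[L.length - (j + 1)]'hk).1 hL)⁻¹ ⟨j, by omega⟩ = ⟨j + 1, by omega⟩
      have hdown : Down L (L[L.length - (j + 1)]'hk).1 ⟨j + 1, by omega⟩ := by
        show L[L.length - (j + 1)]? = some _
        rw [hLk, hp]
      have hstep : sig (L[L.length - (j + 1)]'hk).1 hL ⟨j + 1, by omega⟩ = ⟨j, by omega⟩ := by
        apply Fin.ext
        rw [sig_of_down hL hdown]
        show j + 1 - 1 = j
        omega
      rw [← hstep, ← Equiv.Perm.mul_apply, inv_mul_cancel, Equiv.Perm.one_apply]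

end Key

lemma resid_aux {n : ℕ} (L : List (Fin n × Bool)) (hL : FreeGroup.reduce L = L)
    (hne : L ≠ []) :
    ∃ (m : ℕ) (φ : FreeGroup (Fin n) →* Equiv.Perm (Fin (m + 1))), φ (FreeGroup.mk L) ≠ 1 := by
  have hm : 0 < L.length := List.length_pos_iff.mpr hne
  refine ⟨L.length, FreeGroup.lift (fun i => sig i hL), ?_⟩
  intro hφ
  have h0 : (FreeGroup.lift (fun i => sig i hL)) (FreeGroup.mk L) ⟨0, by omega⟩ =
      ⟨L.length, by omega⟩ := by
    rw [FreeGroup.lift_mk]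
    have hkey := key hL L.length le_rfl
    rw [Nat.sub_self, List.drop_zero] at hkey
    exact hkey
  rw [hφ] at h0
  simp only [Equiv.Perm.coe_one, id_eq, Fin.mk.injEq] at h0
  omega

lemma resid {n : ℕ} (w : FreeGroup (Fin n)) (hw : w ≠ 1) :
    ∃ (m : ℕ) (φ : FreeGroup (Fin n) →* Equiv.Perm (Fin (m + 1))), φ w ≠ 1 := by
  have hL : FreeGroup.reduce w.toWord = w.toWord := FreeGroup.reduce_toWord w
  have hne : w.toWord ≠ [] := fun h => hw (FreeGroup.toWord_eq_nil_iff.mp h)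
  obtain ⟨m, φ, hφ⟩ := resid_aux w.toWord hL hne
  rw [FreeGroup.mk_toWord] at hφ
  exact ⟨m, φ, hφ⟩

instance homFinite {n : ℕ} {G : Type*} [Group G] [Finite G] :
    Finite (FreeGroup (Fin n) →* G) :=
  Finite.of_injective (fun ψ => ψ ∘ FreeGroup.of)
    (fun ψ₁ ψ₂ h => FreeGroup.ext_hom _ _ fun a => congrFun h a)

end Stmt9Aux

theorem stmt_9 (n : ℕ) :
    ∀ f : FreeGroup (Fin n) →* FreeGroup (Fin n),
      Function.Surjective f → Function.Injective f := by
  intro f hf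
  have hker : ∀ x : FreeGroup (Fin n), f x = 1 → x = 1 := by
    intro x hx
    by_contra hx1
    obtain ⟨m, φ, hφ⟩ := Stmt9Aux.resid x hx1
    have hinj : Function.Injective
        (fun ψ : FreeGroup (Fin n) →* Equiv.Perm (Fin (m + 1)) => ψ.comp f) := by
      intro ψ₁ ψ₂ h
      apply MonoidHom.ext
      intro y
      obtain ⟨z, rfl⟩ := hf y
      exact DFunLike.congr_fun h z
    obtain ⟨ψ, hψ⟩ := (Finite.injective_iff_surjective.mp hinj) φ
    apply hφ
    rw [← hψ]
    show ψ (f x) = 1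
    rw [hx, map_one]
  intro a b hab
  have h1 : f (a * b⁻¹) = 1 := by rw [map_mul, map_inv, hab, mul_inv_cancel]
  have h2 := hker _ h1
  rwa [mul_inv_eq_one] at h2
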